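/- arXiv:1401.7088 — 3 statements merged into one kernel-verified Lean document; each statement's English description precedes it below -/
import Mathlib

section
/- Let ζ be Gamma-distributed with shape κ > 0 and scale Θ > 0, let r have density 2r/R² on [0,R], independent of ζ, and let γ = P·r^(−β)·ζ for constants P > 0 and β > 0. Then the density of γ is f_γ(x) = (2 (PΘ)^{2/β} / (β Γ(κ) x^{1+2/β} R²)) · Γ_l(κ + 2/β, R^β x/(PΘ)), where Γ_l is the lower incomplete Gamma function. -/
open Real

/-- Lower incomplete gamma function `Γ_l(a, b) = ∫₀^b t^(a-1) e^(-t) dt`. -/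
noncomputable def lowerIncGamma (a b : ℝ) : ℝ := ∫ t in (0 : ℝ)..b, t ^ (a - 1) * Real.exp (-t)

/-- If `ζ ~ Gamma(κ, Θ)` and `r` has density `2r/R²` on `[0,R]`, independent of `ζ`,
then `γ = P r^(-β) ζ` has density
`f_γ(x) = (2 (PΘ)^{2/β} / (β Γ(κ) x^{1+2/β} R²)) Γ_l(κ + 2/β, R^β x/(PΘ))`,
where the density of `γ` is computed as
`f_γ(x) = ∫₀^R (r^β/P) f_ζ(x r^β/P) (2r/R²) dr`. -/
theorem stmt_1 (κ Θ P β R : ℝ) (hκ : 0 < κ) (hΘ : 0 < Θ) (hP : 0 < P) (hβ : 0 < β)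
    (hR : 0 < R) (x : ℝ) (hx : 0 < x) :
    (∫ r in (0 : ℝ)..R,
        (r ^ β / P) *
          ((x * r ^ β / P) ^ (κ - 1) * Real.exp (-(x * r ^ β / P) / Θ) /
            (Real.Gamma κ * Θ ^ κ)) * (2 * r / R ^ 2)) =
      2 * (P * Θ) ^ (2 / β) / (β * Real.Gamma κ * x ^ (1 + 2 / β) * R ^ 2) *
        lowerIncGamma (κ + 2 / β) (R ^ β * x / (P * Θ)) := by
  have hPΘ : 0 < P * Θ := mul_pos hP hΘ
  have hG : 0 < Real.Gamma κ := Real.Gamma_pos_of_pos hκ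
  set b := R ^ β * x / (P * Θ) with hbdef
  have hb : 0 < b := by positivity
  set f : ℝ → ℝ := fun r => x * r ^ β / (P * Θ) with hf
  set f' : ℝ → ℝ := fun r => x * (β * r ^ (β - 1)) / (P * Θ) with hf'
  set g : ℝ → ℝ := fun t => t ^ (κ + 2 / β - 1) * Real.exp (-t) with hg
  have himg : f '' Set.Ioo 0 R = Set.Ioo 0 b := by
    ext t
    constructor
    · rintro ⟨r, ⟨hr0, hrR⟩, rfl⟩
      have h1 : (0:ℝ) < r ^ β := Real.rpow_pos_of_pos hr0 β
      have h2 : r ^ β < R ^ β := Real.rpow_lt_rpow hr0.le hrR hβ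
      constructor
      · show 0 < x * r ^ β / (P * Θ); positivity
      · show x * r ^ β / (P * Θ) < b
        rw [hbdef, mul_comm x (r ^ β)]
        gcongr
    · rintro ⟨ht0, htb⟩
      refine ⟨(t * (P * Θ) / x) ^ (1/β), ⟨?_, ?_⟩, ?_⟩
      · positivity
      · have : t * (P * Θ) / x < R ^ β := by
          rw [hbdef] at htb
          rw [div_lt_iff₀ hx]
          calc t * (P * Θ) < R ^ β * x / (P * Θ) * (P * Θ) := by
                exact mul_lt_mul_of_pos_right htb hPΘ
            _ = R ^ β * x := by field_simp
        calc (t * (P * Θ) / x) ^ (1/β) < (R ^ β) ^ (1/β) := by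
              apply Real.rpow_lt_rpow (by positivity) this (by positivity)
          _ = R := by
              rw [one_div]
              exact Real.rpow_rpow_inv hR.le hβ.ne'
      · show x * ((t * (P * Θ) / x) ^ (1/β)) ^ β / (P * Θ) = t
        rw [one_div, Real.rpow_inv_rpow (by positivity) hβ.ne']
        field_simp
  have hderiv : ∀ r ∈ Set.Ioo (0:ℝ) R, HasDerivWithinAt f (f' r) (Set.Ioo 0 R) r := by
    intro r hr
    have : HasDerivAt (fun r : ℝ => r ^ β) (β * r ^ (β - 1)) r :=
      Real.hasDerivAt_rpow_const (Or.inl hr.1.ne')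
    exact (((this.const_mul x).div_const (P * Θ))).hasDerivWithinAt
  have hinj : Set.InjOn f (Set.Ioo 0 R) := by
    intro a ha c hc h
    have : a ^ β = c ^ β := by
      have := h
      simp only [hf] at this
      rw [div_left_inj' hPΘ.ne', mul_right_inj' hx.ne'] at this
      exact this
    have := congrArg (fun y => y ^ (1/β : ℝ)) this
    simpa [one_div, Real.rpow_inv_rpow, ha.1.le, hc.1.le, Real.rpow_natCast,
      ← Real.rpow_natCast, Real.rpow_rpow_inv ha.1.le hβ.ne', Real.rpow_rpow_inv hc.1.le hβ.ne'] using this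
  have key := MeasureTheory.integral_image_eq_integral_abs_deriv_smul measurableSet_Ioo hderiv hinj g
  rw [himg] at key
  rw [lowerIncGamma, intervalIntegral.integral_of_le hb.le,
    MeasureTheory.integral_Ioc_eq_integral_Ioo]
  have hRHS : ∫ t in Set.Ioo (0:ℝ) b, t ^ (κ + 2/β - 1) * Real.exp (-t) =
      ∫ r in Set.Ioo (0:ℝ) R, |f' r| • g (f r) := key
  rw [hRHS, intervalIntegral.integral_of_le hR.le, MeasureTheory.integral_Ioc_eq_integral_Ioo,
    ← MeasureTheory.integral_const_mul]
  apply MeasureTheory.setIntegral_congr_fun measurableSet_Ioo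
  intro r hr
  obtain ⟨hr0, hrR⟩ := hr
  have hrβ : (0:ℝ) < r ^ β := Real.rpow_pos_of_pos hr0 β
  have ht : (0:ℝ) < f r := by show 0 < x * r ^ β / (P*Θ); positivity
  have hfr' : (0:ℝ) < f' r := by
    show 0 < x * (β * r ^ (β-1)) / (P*Θ)
    have := Real.rpow_pos_of_pos hr0 (β - 1); positivity
  -- algebraic identity
  show (r ^ β / P) * ((x * r ^ β / P) ^ (κ - 1) * Real.exp (-(x * r ^ β / P) / Θ) /
            (Real.Gamma κ * Θ ^ κ)) * (2 * r / R ^ 2) =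
    2 * (P * Θ) ^ (2 / β) / (β * Real.Gamma κ * x ^ (1 + 2 / β) * R ^ 2) *
      (|f' r| • g (f r))
  rw [abs_of_pos hfr', smul_eq_mul]
  have e1 : x * r ^ β / P = Θ * f r := by show _ = Θ * (x * r ^ β / (P*Θ)); field_simp
  have e2 : (x * r ^ β / P) ^ (κ - 1) = Θ ^ (κ - 1) * (f r) ^ (κ - 1) := by
    rw [e1, Real.mul_rpow hΘ.le ht.le]
  have e3 : -(x * r ^ β / P) / Θ = -(f r) := by rw [e1]; field_simp
  have e4 : g (f r) = (f r) ^ (κ - 1) * (f r) ^ (2/β : ℝ) * Real.exp (-(f r)) := by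
    show (f r) ^ (κ + 2/β - 1) * Real.exp (-(f r)) = _
    rw [← Real.rpow_add ht]; ring_nf
  have e5 : (f r) ^ (2/β : ℝ) = (x / (P*Θ)) ^ (2/β : ℝ) * r ^ (2:ℝ) := by
    have : f r = (x / (P*Θ)) * r ^ β := by show x * r ^ β / (P*Θ) = _; ring
    rw [this, Real.mul_rpow (by positivity) hrβ.le, ← Real.rpow_mul hr0.le]
    congr 1
    field_simp
  have e6 : Θ ^ (κ - 1) = Θ ^ κ / Θ := by rw [Real.rpow_sub hΘ, Real.rpow_one]
  have e7 : r ^ (β - 1) = r ^ β / r := by rw [Real.rpow_sub hr0, Real.rpow_one]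
  have e8 : x ^ (1 + 2/β : ℝ) = x * x ^ (2/β : ℝ) := by
    rw [Real.rpow_add hx, Real.rpow_one]
  have e9 : (P*Θ) ^ (2/β : ℝ) * (x/(P*Θ)) ^ (2/β : ℝ) = x ^ (2/β : ℝ) := by
    rw [← Real.mul_rpow hPΘ.le (by positivity)]
    congr 1; field_simp
  rw [e2, e3, e4, e5]
  have hΘκ : (0:ℝ) < Θ ^ κ := Real.rpow_pos_of_pos hΘ κ
  have hx2 : (0:ℝ) < x ^ (2/β : ℝ) := Real.rpow_pos_of_pos hx _
  have hPΘ2 : (0:ℝ) < (P*Θ) ^ (2/β : ℝ) := Real.rpow_pos_of_pos hPΘ _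
  have hc2 : (0:ℝ) < (x/(P*Θ)) ^ (2/β : ℝ) := Real.rpow_pos_of_pos (by positivity) _
  have hr2 : r ^ (2:ℝ) = r ^ (2:ℕ) := by rw [← Real.rpow_natCast]; norm_num
  show (r ^ β / P) * (Θ ^ (κ-1) * (f r) ^ (κ-1) * Real.exp (-(f r)) / (Real.Gamma κ * Θ ^ κ)) * (2*r/R^2)
    = 2 * (P * Θ) ^ (2 / β) / (β * Real.Gamma κ * x ^ (1 + 2 / β) * R ^ 2) *
      (x * (β * r ^ (β-1)) / (P*Θ) * ((f r) ^ (κ-1) * ((x/(P*Θ)) ^ (2/β:ℝ) * r ^ (2:ℝ)) * Real.exp (-(f r))))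
  have e5' : (x / (P*Θ)) ^ (2/β : ℝ) = x ^ (2/β:ℝ) / (P*Θ) ^ (2/β:ℝ) :=
    Real.div_rpow hx.le hPΘ.le _
  rw [e6, e7, e8, hr2, e5']
  have hfrk : (0:ℝ) < (f r) ^ (κ - 1) := Real.rpow_pos_of_pos ht _
  rw [show f r = x * r ^ β / (P * Θ) from rfl]
  field_simp
end

section
/- Let γ have the density f_γ(x) = (2 (PΘ)^{2/β}/(β Γ(κ) x^{1+2/β} R²)) Γ_l(κ+2/β, R^β x/(PΘ)) for x > 0. Then its cumulative distribution function is F_γ(x) = Γ_l(κ, R^β x/(PΘ))/Γ(κ) − ((ΘP/x)^{2/β}/(Γ(κ) R²)) Γ_l(κ+2/β, R^β x/(PΘ)). -/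
open MeasureTheory intervalIntegral Set Filter

lemma lig_intable {a : ℝ} (ha : 0 < a) {b : ℝ} (hb : 0 ≤ b) :
    IntervalIntegrable (fun t => t ^ (a - 1) * Real.exp (-t)) volume 0 b := by
  rw [intervalIntegrable_iff_integrableOn_Ioc_of_le hb]
  have := (Real.GammaIntegral_convergent ha).mono_set (Ioc_subset_Ioi_self : Ioc (0:ℝ) b ⊆ Ioi 0)
  exact this.congr_fun (fun t ht => mul_comm _ _) measurableSet_Ioc

lemma lig_nonneg {a b : ℝ} (hb : 0 ≤ b) : 0 ≤ lowerIncGamma a b := by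
  apply intervalIntegral.integral_nonneg hb
  intro t ht
  have : (0:ℝ) ≤ t ^ (a-1) := Real.rpow_nonneg ht.1 _
  positivity

lemma lig_le {a : ℝ} (ha : 0 < a) {b : ℝ} (hb : 0 ≤ b) : lowerIncGamma a b ≤ b ^ a / a := by
  have h1 : lowerIncGamma a b ≤ ∫ t in (0:ℝ)..b, t ^ (a-1) := by
    apply intervalIntegral.integral_mono_on hb (lig_intable ha hb)
      (intervalIntegral.intervalIntegrable_rpow' (by linarith))
    intro t ht
    have h2 : (0:ℝ) ≤ t ^ (a-1) := Real.rpow_nonneg ht.1 _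
    calc t ^ (a-1) * Real.exp (-t) ≤ t ^ (a-1) * 1 :=
          mul_le_mul_of_nonneg_left (Real.exp_le_one_iff.2 (by linarith [ht.1])) h2
      _ = t ^ (a-1) := mul_one _
  rwa [integral_rpow (Or.inl (by linarith)), sub_add_cancel, Real.zero_rpow ha.ne',
    sub_zero] at h1

lemma lig_hasDerivAt {a : ℝ} (ha : 0 < a) {b : ℝ} (hb : 0 < b) :
    HasDerivAt (lowerIncGamma a) (b ^ (a - 1) * Real.exp (-b)) b := by
  apply intervalIntegral.integral_hasDerivAt_right (lig_intable ha hb.le)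
  · exact ⟨Ioi 0, Ioi_mem_nhds hb, ((measurable_id.pow_const _).mul
      (Real.measurable_exp.comp measurable_neg)).aestronglyMeasurable⟩
  · exact ((Real.continuousAt_rpow_const b (a-1) (Or.inl hb.ne')).mul
      ((Real.continuous_exp.comp continuous_neg).continuousAt))

/-- If `γ` has density
`f_γ(x) = (2 (PΘ)^{2/β}/(β Γ(κ) x^{1+2/β} R²)) Γ_l(κ+2/β, R^β x/(PΘ))` for `x > 0`, then its CDF
is `F_γ(x) = Γ_l(κ, R^β x/(PΘ))/Γ(κ) − ((ΘP/x)^{2/β}/(Γ(κ) R²)) Γ_l(κ+2/β, R^β x/(PΘ))`. -/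
theorem stmt_3 (κ Θ P β R : ℝ) (hκ : 0 < κ) (hΘ : 0 < Θ) (hP : 0 < P) (hβ : 0 < β)
    (hR : 0 < R) (x : ℝ) (hx : 0 < x) :
    (∫ u in (0 : ℝ)..x,
        2 * (P * Θ) ^ (2 / β) / (β * Real.Gamma κ * u ^ (1 + 2 / β) * R ^ 2) *
          lowerIncGamma (κ + 2 / β) (R ^ β * u / (P * Θ))) =
      lowerIncGamma κ (R ^ β * x / (P * Θ)) / Real.Gamma κ -
        (Θ * P / x) ^ (2 / β) / (Real.Gamma κ * R ^ 2) *
          lowerIncGamma (κ + 2 / β) (R ^ β * x / (P * Θ)) := by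
  have hg : 0 < Real.Gamma κ := Real.Gamma_pos_of_pos hκ
  set g := Real.Gamma κ with hgdef
  have hPΘ : 0 < P * Θ := mul_pos hP hΘ
  set c : ℝ := R ^ β / (P * Θ) with hcdef
  have hc : 0 < c := div_pos (Real.rpow_pos_of_pos hR β) hPΘ
  set a : ℝ := κ + 2 / β with hadef
  have hb2 : 0 < 2 / β := by positivity
  have ha : 0 < a := by positivity
  set D : ℝ := (P * Θ) ^ (2 / β) / (g * R ^ 2) with hDdef
  have hD : 0 < D := by positivity
  have harg : ∀ u : ℝ, R ^ β * u / (P * Θ) = c * u := fun u => by rw [hcdef]; ring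
  simp only [harg]
  -- key algebraic identity
  have hkey : D * g * c ^ (2 / β) = 1 := by
    have h1 : c ^ (2/β) = (R ^ β) ^ (2/β) / (P*Θ) ^ (2/β) :=
      Real.div_rpow (Real.rpow_pos_of_pos hR β).le hPΘ.le _
    have hb22 : β * (2/β) = 2 := by field_simp
    have h2 : (R ^ β) ^ (2/β) = R ^ (2:ℕ) := by
      rw [← Real.rpow_mul hR.le, hb22, show ((2:ℝ)) = ((2:ℕ):ℝ) by norm_num,
        Real.rpow_natCast]
    rw [h1, h2, hDdef]
    field_simp
  set G : ℝ → ℝ := fun u =>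
    lowerIncGamma κ (c * u) / g - D * u ^ (-(2/β)) * lowerIncGamma a (c * u) with hGdef
  -- derivative
  have hG : ∀ u : ℝ, 0 < u → HasDerivAt G
      (2 * (P * Θ) ^ (2 / β) / (β * g * u ^ (1 + 2 / β) * R ^ 2) *
        lowerIncGamma a (c * u)) u := by
    intro u hu
    have hcu : 0 < c * u := mul_pos hc hu
    have hlin : HasDerivAt (fun u : ℝ => c * u) c u := by
      simpa using (hasDerivAt_id u).const_mul c
    have h1 : HasDerivAt (fun u => lowerIncGamma κ (c * u))
        ((c*u) ^ (κ-1) * Real.exp (-(c*u)) * c) u :=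
      (lig_hasDerivAt hκ hcu).comp u hlin
    have h3 : HasDerivAt (fun u => lowerIncGamma a (c * u))
        ((c*u) ^ (a-1) * Real.exp (-(c*u)) * c) u :=
      (lig_hasDerivAt ha hcu).comp u hlin
    have h2 : HasDerivAt (fun u : ℝ => u ^ (-(2/β)))
        (-(2/β) * u ^ (-(2/β) - 1)) u :=
      Real.hasDerivAt_rpow_const (Or.inl hu.ne')
    have hbig := (h1.div_const g).sub ((h2.const_mul D).mul h3)
    convert hbig using 1
    · rfl
    · rfl
    · rfl
    -- algebra
    set e := Real.exp (-(c*u))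
    set L := lowerIncGamma a (c*u)
    have eq1 : (c*u) ^ (a-1) = (c*u) ^ (κ-1) * (c*u) ^ (2/β) := by
      rw [← Real.rpow_add hcu, hadef]; ring_nf
    have eq2 : (c*u) ^ ((2:ℝ)/β) = c ^ (2/β) * u ^ (2/β) := Real.mul_rpow hc.le hu.le
    have eq3 : u ^ (-(2/β)) * u ^ ((2:ℝ)/β) = 1 := by
      rw [← Real.rpow_add hu]; simp
    have eq4 : u ^ (-(2/β) - 1) = u ^ (-(2/β)) * u⁻¹ := by
      rw [Real.rpow_sub hu, Real.rpow_one, div_eq_mul_inv]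
    have eq5 : u ^ (1 + 2/β) = u * u ^ ((2:ℝ)/β) := by
      rw [Real.rpow_add hu, Real.rpow_one]
    have hune : u ≠ 0 := hu.ne'
    have hup : (0:ℝ) < u ^ ((2:ℝ)/β) := Real.rpow_pos_of_pos hu _
    have cancel : (c*u) ^ (κ-1) * e * c / g =
        D * u ^ (-(2/β)) * ((c*u) ^ (a-1) * e * c) := by
      rw [eq1, eq2]
      have : D * u ^ (-(2/β)) * ((c*u) ^ (κ-1) * (c ^ (2/β) * u ^ (2/β)) * e * c)
          = (D * g * c ^ (2/β)) * (u ^ (-(2/β)) * u ^ (2/β)) * ((c*u) ^ (κ-1) * e * c) / g := by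
        field_simp
      rw [this, hkey, eq3]
      ring
    have eq6 : u ^ (-(2/β)) = (u ^ ((2:ℝ)/β))⁻¹ := Real.rpow_neg hu.le _
    rw [cancel, eq4, eq5, eq6, hDdef]
    field_simp
    ring
  -- integrability of the density on (0, x]
  set K : ℝ := 2 * (P * Θ) ^ (2 / β) / (β * g * R ^ 2) * (c ^ a / a) with hKdef
  have hmono : IntervalIntegrable (fun u => 2 * (P * Θ) ^ (2 / β) /
      (β * g * u ^ (1 + 2 / β) * R ^ 2) * lowerIncGamma a (c * u)) volume 0 x := by
    have hgint : IntervalIntegrable (fun u : ℝ => K * u ^ (κ - 1)) volume 0 x :=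
      (intervalIntegral.intervalIntegrable_rpow' (by linarith)).const_mul _
    apply hgint.mono_fun
    · rw [Set.uIoc_of_le hx.le]
      apply ContinuousOn.aestronglyMeasurable _ measurableSet_Ioc
      intro u hu
      have hu0 : 0 < u := hu.1
      have hcu : 0 < c * u := mul_pos hc hu0
      apply ContinuousAt.continuousWithinAt
      apply ContinuousAt.mul
      · apply ContinuousAt.div continuousAt_const
        · exact (continuousAt_const.mul
            (Real.continuousAt_rpow_const u _ (Or.inl hu0.ne'))).mul continuousAt_const
        · have : (0:ℝ) < β * g * u ^ (1 + 2/β) * R ^ 2 := by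
            have := Real.rpow_pos_of_pos hu0 (1 + 2/β)
            positivity
          exact this.ne'
      · exact (lig_hasDerivAt ha hcu).continuousAt.comp
          ((continuous_const.mul continuous_id).continuousAt)
    · rw [Set.uIoc_of_le hx.le]
      filter_upwards [MeasureTheory.ae_restrict_mem measurableSet_Ioc] with u hu
      have hu0 : 0 < u := hu.1
      have hcu : 0 < c * u := mul_pos hc hu0
      have hup : (0:ℝ) < u ^ (1 + 2/β) := Real.rpow_pos_of_pos hu0 _
      have hf0 : 0 ≤ 2 * (P * Θ) ^ (2 / β) / (β * g * u ^ (1 + 2 / β) * R ^ 2) *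
          lowerIncGamma a (c * u) := by
        have h0 := lig_nonneg (a := a) hcu.le
        positivity
      have hg0 : 0 ≤ K * u ^ (κ - 1) := by
        have := Real.rpow_nonneg hu0.le (κ - 1)
        positivity
      rw [Real.norm_eq_abs, Real.norm_eq_abs, abs_of_nonneg hf0, abs_of_nonneg hg0]
      have h1 : lowerIncGamma a (c * u) ≤ (c * u) ^ a / a := lig_le ha hcu.le
      have hco : 0 < 2 * (P * Θ) ^ (2 / β) / (β * g * u ^ (1 + 2 / β) * R ^ 2) := by
        positivity
      calc 2 * (P * Θ) ^ (2 / β) / (β * g * u ^ (1 + 2 / β) * R ^ 2) *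
            lowerIncGamma a (c * u)
          ≤ 2 * (P * Θ) ^ (2 / β) / (β * g * u ^ (1 + 2 / β) * R ^ 2) * ((c * u) ^ a / a) :=
            mul_le_mul_of_nonneg_left h1 hco.le
        _ = K * u ^ (κ - 1) := by
            have h2 : (c * u) ^ a = c ^ a * u ^ a := Real.mul_rpow hc.le hu0.le
            have h4 : u ^ a = u ^ (1 + 2/β) * u ^ (κ - 1) := by
              rw [← Real.rpow_add hu0, hadef]; ring_nf
            rw [h2, h4, hKdef]
            field_simp
  -- limit of G at 0 from the right
  have hrpow0 : ∀ k : ℝ, 0 < k → ∀ M : ℝ,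
      Tendsto (fun u : ℝ => M * (c * u) ^ k) (nhdsWithin 0 (Ioi 0)) (nhds 0) := by
    intro k hk M
    have h0 : Tendsto (fun u : ℝ => c * u) (nhds (0:ℝ)) (nhds 0) := by
      have h : Tendsto (fun u : ℝ => c * u) (nhds 0) (nhds (c * 0)) :=
        (continuous_const.mul continuous_id).tendsto (0:ℝ)
      rwa [mul_zero] at h
    have h2 := (Real.continuousAt_rpow_const 0 k (Or.inr hk.le)).tendsto.comp h0
    rw [Real.zero_rpow hk.ne'] at h2
    simpa using (h2.const_mul M).mono_left nhdsWithin_le_nhds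
  have htend0 : Tendsto G (nhdsWithin 0 (Ioi 0)) (nhds 0) := by
    have t1 : Tendsto (fun u : ℝ => lowerIncGamma κ (c * u) / g)
        (nhdsWithin 0 (Ioi 0)) (nhds 0) := by
      have hsq := squeeze_zero'
        (eventually_nhdsWithin_of_forall fun u (hu : u ∈ Ioi 0) =>
          lig_nonneg (a := κ) (mul_pos hc hu).le)
        (eventually_nhdsWithin_of_forall fun u (hu : u ∈ Ioi 0) => by
          have := lig_le hκ (mul_pos hc hu).le
          calc lowerIncGamma κ (c * u) ≤ (c * u) ^ κ / κ := this
            _ = κ⁻¹ * (c * u) ^ κ := by ring)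
        (hrpow0 κ hκ κ⁻¹)
      simpa using hsq.div_const g
    have t2 : Tendsto (fun u : ℝ => D * u ^ (-(2/β)) * lowerIncGamma a (c * u))
        (nhdsWithin 0 (Ioi 0)) (nhds 0) := by
      apply squeeze_zero'
        (eventually_nhdsWithin_of_forall fun u (hu : u ∈ Ioi 0) => ?_)
        (eventually_nhdsWithin_of_forall fun u (hu : u ∈ Ioi 0) => ?_)
        (hrpow0 κ hκ (D * c ^ (2/β) / a))
      · have hu0 : (0:ℝ) < u := hu
        have h0 := lig_nonneg (a := a) (mul_pos hc hu0).le
        have h1 : (0:ℝ) ≤ u ^ (-(2/β)) := (Real.rpow_pos_of_pos hu0 _).le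
        positivity
      · have hu0 : (0:ℝ) < u := hu
        have hcu : 0 < c * u := mul_pos hc hu0
        have h1 : lowerIncGamma a (c * u) ≤ (c * u) ^ a / a := lig_le ha hcu.le
        have hupos : (0:ℝ) < u ^ (-(2/β)) := Real.rpow_pos_of_pos hu0 _
        have key2 : u ^ (-(2/β)) * (c * u) ^ a = c ^ (2/β) * (c * u) ^ κ := by
          have e1 : (c * u) ^ a = (c * u) ^ ((2:ℝ)/β) * (c * u) ^ κ := by
            rw [← Real.rpow_add hcu, hadef]; ring_nf
          have e2 : (c * u) ^ ((2:ℝ)/β) = c ^ (2/β) * u ^ (2/β) :=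
            Real.mul_rpow hc.le hu0.le
          have e3 : u ^ (-(2/β)) * u ^ ((2:ℝ)/β) = 1 := by
            rw [← Real.rpow_add hu0]; simp
          rw [e1, e2]
          calc u ^ (-(2/β)) * (c ^ (2/β) * u ^ ((2:ℝ)/β) * (c * u) ^ κ)
              = c ^ (2/β) * ((u ^ (-(2/β)) * u ^ ((2:ℝ)/β)) * (c * u) ^ κ) := by ring
            _ = c ^ (2/β) * (c * u) ^ κ := by rw [e3, one_mul]
        calc D * u ^ (-(2/β)) * lowerIncGamma a (c * u)
            ≤ D * u ^ (-(2/β)) * ((c * u) ^ a / a) :=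
              mul_le_mul_of_nonneg_left h1 (by positivity)
          _ = D * c ^ (2/β) / a * (c * u) ^ κ := by
              have hstep : D * u ^ (-(2/β)) * ((c * u) ^ a / a)
                  = D * (u ^ (-(2/β)) * (c * u) ^ a) / a := by ring
              rw [hstep, key2]; ring
    simpa using t1.sub t2
  have htendx : Tendsto G (nhdsWithin x (Iio x)) (nhds (G x)) :=
      ((hG x hx).continuousAt.tendsto).mono_left nhdsWithin_le_nhds
  have hftc := intervalIntegral.integral_eq_sub_of_hasDerivAt_of_tendsto hx
    (fun u hu => hG u hu.1) hmono htend0 htendx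
  rw [hftc, sub_zero]
  have hx2 : (Θ * P / x) ^ (2/β) = (P * Θ) ^ (2/β) * x ^ (-(2/β)) := by
    rw [Real.div_rpow (by positivity) hx.le, mul_comm Θ P, Real.rpow_neg hx.le,
      div_eq_mul_inv]
  rw [show G x = lowerIncGamma κ (c * x) / g -
      D * x ^ (-(2/β)) * lowerIncGamma a (c * x) from rfl, hx2, hDdef]
  ring
end

section
/- Let S and I be independent nonnegative random variables with Laplace transforms M_S(t) = E[e^{−tS}] and M_I(t) = E[e^{−tI}], and let σ² > 0. Then E[ln(1 + S/(I + σ²))] = ∫₀^∞ (M_I(t)(1 − M_S(t))/t) e^{−σ² t} dt, provided the expectation is finite. -/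
open MeasureTheory ProbabilityTheory

open Set Real

lemma exp_int (s : ℝ) (hs : 0 < s) : ∫ t in Set.Ioi (0:ℝ), Real.exp (-(s*t)) = 1/s := by
  have hderiv : ∀ x ∈ Ioi (0:ℝ), HasDerivAt (fun t => -Real.exp (-(s*t))/s) (Real.exp (-(s*x))) x := by
    intro x _
    have h : HasDerivAt (fun t : ℝ => -(s*t)) (-s) x := by
      simpa using ((hasDerivAt_id x).const_mul s).fun_neg
    have := (h.exp.fun_neg.div_const s)
    refine this.congr_deriv ?_
    rw [mul_neg, neg_neg, mul_div_assoc, div_self hs.ne', mul_one]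
  have hint : IntegrableOn (fun t => Real.exp (-(s*t))) (Ioi (0:ℝ)) := by
    simpa [neg_mul] using exp_neg_integrableOn_Ioi 0 hs
  have hcont : ContinuousOn (fun t => -Real.exp (-(s*t))/s) (Ici (0:ℝ)) := by
    fun_prop
  have htend : Filter.Tendsto (fun t => -Real.exp (-(s*t))/s) Filter.atTop (nhds 0) := by
    have h1 : Filter.Tendsto (fun t : ℝ => -(s*t)) Filter.atTop Filter.atBot := by
      have := Filter.Tendsto.const_mul_atTop hs Filter.tendsto_id
      simpa [neg_mul] using Filter.tendsto_neg_atBot_iff.mpr this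
    have := (Real.tendsto_exp_atBot.comp h1).neg.div_const s
    simpa using this
  rw [MeasureTheory.integral_Ioi_of_hasDerivAt_of_tendsto (hcont _ Set.self_mem_Ici) hderiv hint htend]
  simp [neg_div]

lemma interval_exp (t a b : ℝ) (ht : 0 < t) :
    ∫ s in a..b, Real.exp (-(t*s)) = (Real.exp (-(t*a)) - Real.exp (-(t*b)))/t := by
  have h : ∀ s ∈ Set.uIcc a b, HasDerivAt (fun u => -Real.exp (-(t*u))/t) (Real.exp (-(t*s))) s := by
    intro s _
    have h : HasDerivAt (fun u : ℝ => -(t*u)) (-t) s := by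
      simpa using ((hasDerivAt_id s).const_mul t).fun_neg
    have := (h.exp.fun_neg.div_const t)
    refine this.congr_deriv ?_
    rw [mul_neg, neg_neg, mul_div_assoc, div_self ht.ne', mul_one]
  rw [intervalIntegral.integral_eq_sub_of_hasDerivAt h]
  · ring
  · apply Continuous.intervalIntegrable; fun_prop

lemma frullani (a b : ℝ) (ha : 0 < a) (hab : a ≤ b) :
    ∫⁻ t in Set.Ioi (0:ℝ), ENNReal.ofReal ((Real.exp (-(a*t)) - Real.exp (-(b*t)))/t)
      = ENNReal.ofReal (Real.log (b/a)) := by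
  have hb : 0 < b := lt_of_lt_of_le ha hab
  have step1 : ∀ t ∈ Ioi (0:ℝ),
      ENNReal.ofReal ((Real.exp (-(a*t)) - Real.exp (-(b*t)))/t)
        = ∫⁻ s in Ioc a b, ENNReal.ofReal (Real.exp (-(s*t))) := by
    intro t ht
    rw [Set.mem_Ioi] at ht
    have hreal : ∫ s in Ioc a b, Real.exp (-(s*t)) = (Real.exp (-(a*t)) - Real.exp (-(b*t)))/t := by
      rw [← intervalIntegral.integral_of_le hab]
      have := interval_exp t a b ht
      simp_rw [mul_comm t _] at this
      rw [this]
    rw [← hreal, MeasureTheory.ofReal_integral_eq_lintegral_ofReal]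
    · apply Continuous.integrableOn_Ioc; fun_prop
    · exact Filter.Eventually.of_forall fun s => (Real.exp_pos _).le
  rw [MeasureTheory.setLIntegral_congr_fun measurableSet_Ioi
    step1]
  rw [MeasureTheory.lintegral_lintegral_swap]
  · have step2 : ∀ s ∈ Ioc a b,
        (∫⁻ t in Ioi (0:ℝ), ENNReal.ofReal (Real.exp (-(s*t)))) = ENNReal.ofReal (1/s) := by
      intro s hs
      have hs0 : 0 < s := lt_of_lt_of_le ha hs.1.le
      rw [← exp_int s hs0, MeasureTheory.ofReal_integral_eq_lintegral_ofReal]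
      · exact (by simpa [neg_mul] using exp_neg_integrableOn_Ioi 0 hs0 : IntegrableOn (fun t => Real.exp (-(s*t))) (Ioi 0))
      · exact Filter.Eventually.of_forall fun t => (Real.exp_pos _).le
    rw [MeasureTheory.setLIntegral_congr_fun measurableSet_Ioc
      step2]
    rw [← MeasureTheory.ofReal_integral_eq_lintegral_ofReal]
    · rw [← intervalIntegral.integral_of_le hab, integral_one_div]
      intro h
      rw [Set.mem_uIcc] at h
      rcases h with h | h
      · exact absurd h.1 (not_le.mpr ha)
      · exact absurd h.1 (not_le.mpr hb)
    · apply MeasureTheory.IntegrableOn.mono_set _ Ioc_subset_Icc_self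
      exact (ContinuousOn.div continuousOn_const continuousOn_id
        (fun x hx => ne_of_gt (lt_of_lt_of_le ha hx.1))).integrableOn_compact isCompact_Icc
    · refine (MeasureTheory.ae_restrict_iff' measurableSet_Ioc).mpr
        (Filter.Eventually.of_forall fun s hs => ?_)
      have h1 : 0 < s := lt_of_lt_of_le ha hs.1.le
      positivity
  · apply Measurable.aemeasurable
    apply Measurable.ennreal_ofReal
    fun_prop

/-- Hamdi's lemma: for independent nonnegative `S` and `I` with Laplace transforms `M_S`, `M_I`
and noise power `σ² > 0`,
`E[ln(1 + S/(I + σ²))] = ∫₀^∞ (M_I(t)(1 − M_S(t))/t) e^{−σ² t} dt`,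
provided the expectation is finite. -/
theorem stmt_14 {Ω : Type*} [MeasurableSpace Ω] (μ : Measure Ω) [IsProbabilityMeasure μ]
    (S I : Ω → ℝ) (σ2 : ℝ) (hσ : 0 < σ2)
    (hSpos : ∀ ω, 0 ≤ S ω) (hIpos : ∀ ω, 0 ≤ I ω)
    (hSmeas : Measurable S) (hImeas : Measurable I)
    (hindep : IndepFun S I μ)
    (hfin : Integrable (fun ω => Real.log (1 + S ω / (I ω + σ2))) μ) :
    (∫ ω, Real.log (1 + S ω / (I ω + σ2)) ∂μ) =
      ∫ t in Set.Ioi (0 : ℝ),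
        (∫ ω, Real.exp (-(t * I ω)) ∂μ) * (1 - ∫ ω, Real.exp (-(t * S ω)) ∂μ) / t *
          Real.exp (-(σ2 * t)) := by
  set a : Ω → ℝ := fun ω => I ω + σ2 with ha_def
  set b : Ω → ℝ := fun ω => S ω + I ω + σ2 with hb_def
  have ha0 : ∀ ω, 0 < a ω := fun ω => by have := hIpos ω; simp [ha_def]; linarith
  have hab : ∀ ω, a ω ≤ b ω := fun ω => by have := hSpos ω; simp [ha_def, hb_def]; linarith
  set g : Ω → ℝ → ℝ := fun ω t => (Real.exp (-(a ω * t)) - Real.exp (-(b ω * t)))/t with hg_def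
  set MI : ℝ → ℝ := fun t => ∫ ω, Real.exp (-(t * I ω)) ∂μ with hMI_def
  set MS : ℝ → ℝ := fun t => ∫ ω, Real.exp (-(t * S ω)) ∂μ with hMS_def
  set h : ℝ → ℝ := fun t => MI t * (1 - MS t) / t * Real.exp (-(σ2 * t)) with hh_def
  have hφpos : ∀ ω, 0 ≤ Real.log (1 + S ω / (I ω + σ2)) := by
    intro ω
    apply Real.log_nonneg
    have h1 : 0 ≤ S ω / (I ω + σ2) := div_nonneg (hSpos ω) (ha0 ω).le
    linarith
  -- pointwise Frullani
  have hfru : ∀ ω, ENNReal.ofReal (Real.log (1 + S ω / (I ω + σ2)))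
      = ∫⁻ t in Set.Ioi (0:ℝ), ENNReal.ofReal (g ω t) := by
    intro ω
    rw [frullani (a ω) (b ω) (ha0 ω) (hab ω)]
    congr 2
    rw [hb_def, ha_def]
    have hne : I ω + σ2 ≠ 0 := (ha0 ω).ne'
    field_simp
    ring
  -- integrability of exp moments
  have hintexp : ∀ (t : ℝ), 0 ≤ t → ∀ (X : Ω → ℝ), Measurable X → (∀ ω, 0 ≤ X ω) →
      Integrable (fun ω => Real.exp (-(t * X ω))) μ := by
    intro t ht X hX hXpos
    apply Integrable.mono' (integrable_const 1)
    · exact ((hX.const_mul t).neg.exp).aestronglyMeasurable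
    · refine Filter.Eventually.of_forall fun ω => ?_
      rw [Real.norm_eq_abs, abs_of_pos (Real.exp_pos _)]
      exact Real.exp_le_one_iff.mpr (by nlinarith [hXpos ω])
  -- per-t computation
  have hpt : ∀ t ∈ Set.Ioi (0:ℝ), (∫⁻ ω, ENNReal.ofReal (g ω t) ∂μ) = ENNReal.ofReal (h t) := by
    intro t ht
    rw [Set.mem_Ioi] at ht
    have hiI := hintexp t ht.le I hImeas hIpos
    have hiS := hintexp t ht.le S hSmeas hSpos
    have hiSI : Integrable (fun ω => Real.exp (-(t * S ω)) * Real.exp (-(t * I ω))) μ := by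
      apply Integrable.mono' hiI
      · exact (((hSmeas.const_mul t).neg.exp).mul ((hImeas.const_mul t).neg.exp)).aestronglyMeasurable
      · refine Filter.Eventually.of_forall fun ω => ?_
        rw [Real.norm_eq_abs, abs_of_pos (by positivity)]
        nlinarith [Real.exp_pos (-(t * I ω)), Real.exp_le_one_iff.mpr (by nlinarith [hSpos ω] : -(t * S ω) ≤ 0), Real.exp_pos (-(t * S ω))]
    have hgrw : ∀ ω, g ω t = (Real.exp (-(t * I ω)) - Real.exp (-(t * S ω)) * Real.exp (-(t * I ω))) * (Real.exp (-(σ2 * t)) / t) := by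
      intro ω
      rw [hg_def]
      have e1 : Real.exp (-(a ω * t)) = Real.exp (-(t * I ω)) * Real.exp (-(σ2 * t)) := by
        rw [← Real.exp_add]; congr 1; rw [ha_def]; ring
      have e2 : Real.exp (-(b ω * t)) = Real.exp (-(t * S ω)) * (Real.exp (-(t * I ω)) * Real.exp (-(σ2 * t))) := by
        rw [← Real.exp_add, ← Real.exp_add]; congr 1; rw [hb_def]; ring
      simp only [e1, e2]
      ring
    have hgi : Integrable (fun ω => g ω t) μ := by
      simp_rw [hgrw]
      exact (hiI.sub hiSI).mul_const _
    have hgpos : ∀ ω, 0 ≤ g ω t := by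
      intro ω
      rw [hg_def]
      apply div_nonneg _ ht.le
      have : -(b ω * t) ≤ -(a ω * t) := by nlinarith [hab ω]
      linarith [Real.exp_le_exp.mpr this]
    rw [← MeasureTheory.ofReal_integral_eq_lintegral_ofReal hgi
      (Filter.Eventually.of_forall hgpos)]
    congr 1
    calc ∫ ω, g ω t ∂μ
        = ∫ ω, (Real.exp (-(t * I ω)) - Real.exp (-(t * S ω)) * Real.exp (-(t * I ω))) * (Real.exp (-(σ2 * t)) / t) ∂μ := by
          simp_rw [hgrw]
      _ = (∫ ω, (Real.exp (-(t * I ω)) - Real.exp (-(t * S ω)) * Real.exp (-(t * I ω))) ∂μ) * (Real.exp (-(σ2 * t)) / t) := by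
          rw [integral_mul_const]
      _ = (MI t - (MS t) * (MI t)) * (Real.exp (-(σ2 * t)) / t) := by
          rw [integral_sub hiI hiSI]
          congr 1
          have hm : Measurable fun x : ℝ => Real.exp (-(t * x)) := by fun_prop
          have hind2 : IndepFun (fun ω => Real.exp (-(t * S ω))) (fun ω => Real.exp (-(t * I ω))) μ :=
            hindep.comp hm hm
          have := hind2.integral_mul_eq_mul_integral hiS.aestronglyMeasurable hiI.aestronglyMeasurable
          simp [Pi.mul_def] at this
          rw [this]
      _ = h t := by rw [hh_def]; ring
  -- measurability of integrands
  have hgm : Measurable (Function.uncurry fun t ω => ENNReal.ofReal (g ω t)) := by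
    apply Measurable.ennreal_ofReal
    rw [hg_def]
    fun_prop
  -- strong measurability of h
  have hMIm : StronglyMeasurable MI := by
    rw [hMI_def]
    apply MeasureTheory.StronglyMeasurable.integral_prod_right' (f := fun p : ℝ × Ω => Real.exp (-(p.1 * I p.2)))
    exact Measurable.stronglyMeasurable (by fun_prop)
  have hMSm : StronglyMeasurable MS := by
    rw [hMS_def]
    apply MeasureTheory.StronglyMeasurable.integral_prod_right' (f := fun p : ℝ × Ω => Real.exp (-(p.1 * S p.2)))
    exact Measurable.stronglyMeasurable (by fun_prop)
  have hhm : AEStronglyMeasurable h (volume.restrict (Set.Ioi (0:ℝ))) := by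
    rw [hh_def]
    exact (((hMIm.measurable.mul (measurable_const.sub hMSm.measurable)).div measurable_id).mul
      (by fun_prop : Measurable fun t : ℝ => Real.exp (-(σ2 * t)))).aestronglyMeasurable
  -- nonnegativity of h on Ioi 0
  have hhpos : ∀ t ∈ Set.Ioi (0:ℝ), 0 ≤ h t := by
    intro t ht
    rw [Set.mem_Ioi] at ht
    have h1 : 0 ≤ MI t := integral_nonneg fun ω => (Real.exp_pos _).le
    have h2 : MS t ≤ 1 := by
      rw [hMS_def]
      calc ∫ ω, Real.exp (-(t * S ω)) ∂μ ≤ ∫ _ω, (1:ℝ) ∂μ := by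
            apply integral_mono (hintexp t ht.le S hSmeas hSpos) (integrable_const 1)
            intro ω
            exact Real.exp_le_one_iff.mpr (by nlinarith [hSpos ω])
        _ = 1 := by simp
    rw [hh_def]
    have := Real.exp_pos (-(σ2 * t))
    have h3 : 0 ≤ MI t * (1 - MS t) := mul_nonneg h1 (by linarith)
    positivity
  -- main calc
  rw [MeasureTheory.integral_eq_lintegral_of_nonneg_ae (Filter.Eventually.of_forall hφpos) hfin.1]
  rw [MeasureTheory.integral_eq_lintegral_of_nonneg_ae
    ((MeasureTheory.ae_restrict_iff' measurableSet_Ioi).mpr (Filter.Eventually.of_forall hhpos)) hhm]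
  congr 1
  calc ∫⁻ ω, ENNReal.ofReal (Real.log (1 + S ω / (I ω + σ2))) ∂μ
      = ∫⁻ ω, (∫⁻ t in Set.Ioi (0:ℝ), ENNReal.ofReal (g ω t)) ∂μ := by
        exact lintegral_congr fun ω => hfru ω
    _ = ∫⁻ t in Set.Ioi (0:ℝ), ∫⁻ ω, ENNReal.ofReal (g ω t) ∂μ := by
        exact (MeasureTheory.lintegral_lintegral_swap hgm.aemeasurable).symm
    _ = ∫⁻ t in Set.Ioi (0:ℝ), ENNReal.ofReal (h t) := by
        exact MeasureTheory.setLIntegral_congr_fun measurableSet_Ioi hpt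
end
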